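/- arXiv:2104.13529 — 2 statements merged into one kernel-verified Lean document; each statement's English description precedes it below -/
import Mathlib

section
/- Let U be a unitary operator on H satisfying the SSQW conditions. Then there exists, for each x ∈ ℤ, an orthonormal basis {η₁ˣ, η₂ˣ} of H_x such that U H_x ⊆ ℂη₁^{x−1} ⊕ H_x ⊕ ℂη₂^{x+1} for every x ∈ ℤ. -/
noncomputable section

/-- `H = ⊕_{x∈ℤ} H_x`, the ℓ² direct sum with each `H_x` a copy of `ℂ²`. -/
abbrev H : Type := lp (fun _ : ℤ × Fin 2 => ℂ) 2

/-- The canonical orthonormal basis vector `eᵢˣ` of `H_x` viewed in `H`. -/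
def e (x : ℤ) (i : Fin 2) : H := lp.single 2 (x, i) 1

/-- The subspace `H_x` of `H`. -/
def Hx (x : ℤ) : Submodule ℂ H := Submodule.span ℂ {e x 0, e x 1}

/-- The rank-one operator `|u⟩⟨v| : w ↦ ⟨v, w⟩ u`. -/
def ketbra (u v : H) : H →L[ℂ] H := ((innerSL ℂ) v).smulRight u

/-- The orthogonal projection of `H` onto `H_x`. -/
def P (x : ℤ) : H →L[ℂ] H := ketbra (e x 0) (e x 0) + ketbra (e x 1) (e x 1)

/-- A unitary (linear isometric equivalence) viewed as a continuous linear map. -/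
def clm (U : H ≃ₗᵢ[ℂ] H) : H →L[ℂ] H := U.toLinearIsometry.toContinuousLinearMap

/-- `{u, v}` is an orthonormal basis of the two dimensional space `H_x`. -/
def ONBx (x : ℤ) (u v : H) : Prop :=
  u ∈ Hx x ∧ v ∈ Hx x ∧ ‖u‖ = 1 ∧ ‖v‖ = 1 ∧ (inner ℂ u v : ℂ) = 0

/-- The SSQW conditions: `U H_x ⊆ H_{x-1} ⊕ H_x ⊕ H_{x+1}` and
`rank(P_{x±1} U P_x) ≤ 1` for all `x`. -/
def SSQW (U : H ≃ₗᵢ[ℂ] H) : Prop :=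
  (∀ x : ℤ, ∀ ψ ∈ Hx x, U ψ ∈ Hx (x - 1) ⊔ Hx x ⊔ Hx (x + 1)) ∧
  (∀ x : ℤ, LinearMap.rank (((P (x + 1)).comp ((clm U).comp (P x))).toLinearMap) ≤ 1) ∧
  (∀ x : ℤ, LinearMap.rank (((P (x - 1)).comp ((clm U).comp (P x))).toLinearMap) ≤ 1)

local notation "⟪" x ", " y "⟫" => @inner ℂ H _ x y
lemma inner_e (x y : ℤ) (i j : Fin 2) :
    ⟪e x i, e y j⟫ = if (x, i) = (y, j) then 1 else 0 := by
  rw [e, e, lp.inner_single_left]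
  by_cases h : (x, i) = (y, j)
  · rw [if_pos h, h, lp.single_apply_self]; simp
  · rw [if_neg h, lp.single_apply_ne 2 _ _ h]; simp
lemma P_apply (y : ℤ) (ψ : H) :
    P y ψ = ⟪e y 0, ψ⟫ • e y 0 + ⟪e y 1, ψ⟫ • e y 1 := by
  simp [P, ketbra]
lemma P_e (y z : ℤ) (i : Fin 2) : P y (e z i) = if y = z then e z i else 0 := by
  by_cases h : y = z
  · subst h; fin_cases i <;> simp [P_apply, inner_e, -inner_self_eq_norm_sq_to_K]
  · simp [P_apply, inner_e, h, Prod.ext_iff]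

lemma e_mem (y : ℤ) (i : Fin 2) : e y i ∈ Hx y := by
  fin_cases i
  · exact Submodule.subset_span (by simp)
  · exact Submodule.subset_span (by simp)

lemma P_mem (y : ℤ) (ψ : H) : P y ψ ∈ Hx y := by
  rw [P_apply]
  exact Submodule.add_mem _ (Submodule.smul_mem _ _ (e_mem y 0))
    (Submodule.smul_mem _ _ (e_mem y 1))

lemma P_of_mem {y : ℤ} {ψ : H} (h : ψ ∈ Hx y) : P y ψ = ψ := by
  induction h using Submodule.span_induction with
  | mem w hw =>
    rcases hw with hw | hw <;> · subst hw; simp [P_e]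
  | zero => simp
  | add a b _ _ ha hb => simp [ha, hb]
  | smul c a _ ha => simp [ha]

lemma P_of_mem_ne {y z : ℤ} {ψ : H} (hne : y ≠ z) (h : ψ ∈ Hx z) : P y ψ = 0 := by
  induction h using Submodule.span_induction with
  | mem w hw =>
    rcases hw with hw | hw <;> · subst hw; simp [P_e, hne]
  | zero => simp
  | add a b _ _ ha hb => simp [ha, hb]
  | smul c a _ ha => simp [ha]

lemma rep_of_mem {y : ℤ} {ψ : H} (h : ψ ∈ Hx y) :
    ψ = ⟪e y 0, ψ⟫ • e y 0 + ⟪e y 1, ψ⟫ • e y 1 := by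
  conv_lhs => rw [← P_of_mem h, P_apply]

lemma inner_fiber_eq_zero {x y : ℤ} {u v : H} (hne : x ≠ y)
    (hu : u ∈ Hx x) (hv : v ∈ Hx y) : ⟪u, v⟫ = 0 := by
  rw [rep_of_mem hu, rep_of_mem hv]
  simp [inner_add_left, inner_add_right, inner_smul_left, inner_smul_right, inner_e,
    Prod.ext_iff, hne]

lemma P_sa (y : ℤ) (u v : H) : ⟪P y u, v⟫ = ⟪u, P y v⟫ := by
  rw [P_apply, P_apply]
  simp [inner_add_left, inner_add_right, inner_smul_left, inner_smul_right,
    inner_conj_symm]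

lemma P_idem (y : ℤ) (v : H) : P y (P y v) = P y v := P_of_mem (P_mem y v)

lemma norm_eq_one_of_inner_self {w : H} (h : ⟪w, w⟫ = 1) : ‖w‖ = 1 := by
  have h2 := inner_self_eq_norm_sq_to_K (𝕜 := ℂ) w
  rw [h] at h2
  have h3 : ((‖w‖ ^ 2 : ℝ) : ℂ) = ((1:ℝ) : ℂ) := by push_cast; exact h2.symm
  have h4 : ‖w‖ ^ 2 = 1 := Complex.ofReal_injective h3
  nlinarith [norm_nonneg w]

lemma inner_combo (y : ℤ) (a b c d : ℂ) :
    ⟪a • e y 0 + b • e y 1, c • e y 0 + d • e y 1⟫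
      = starRingEnd ℂ a * c + starRingEnd ℂ b * d := by
  simp [inner_add_left, inner_add_right, inner_smul_left, inner_smul_right, inner_e,
    Prod.ext_iff, -inner_self_eq_norm_sq_to_K]
  ring

lemma exists_perp {y : ℤ} {u : H} (hu : u ∈ Hx y) (hn : ‖u‖ = 1) :
    ∃ v ∈ Hx y, ‖v‖ = 1 ∧ ⟪u, v⟫ = 0 := by
  set a := ⟪e y 0, u⟫ with ha
  set b := ⟪e y 1, u⟫ with hb
  refine ⟨-(starRingEnd ℂ b) • e y 0 + (starRingEnd ℂ a) • e y 1,
    Submodule.add_mem _ (Submodule.smul_mem _ _ (e_mem y 0))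
      (Submodule.smul_mem _ _ (e_mem y 1)), ?_, ?_⟩
  · apply norm_eq_one_of_inner_self
    have h1 : ⟪u, u⟫ = 1 := by
      rw [inner_self_eq_norm_sq_to_K, hn]; norm_num
    rw [rep_of_mem hu, ← ha, ← hb, inner_combo] at h1
    rw [inner_combo]
    simp only [map_neg, RingHomCompTriple.comp_apply, RingHom.id_apply, starRingEnd_self_apply]
    rw [← h1]; ring
  · conv_lhs => rw [rep_of_mem hu, ← ha, ← hb]
    rw [inner_combo]
    ring


lemma norm_smul_inv (w : H) (hw : w ≠ 0) : ‖((‖w‖:ℂ))⁻¹ • w‖ = 1 := by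
  rw [norm_smul, norm_inv, Complex.norm_real, Real.norm_eq_abs, abs_of_nonneg (norm_nonneg w)]
  exact inv_mul_cancel₀ (norm_ne_zero_iff.2 hw)

lemma mem_span_norm_smul (w : H) (hw : w ≠ 0) :
    w ∈ Submodule.span ℂ {((‖w‖:ℂ))⁻¹ • w} := by
  rw [Submodule.mem_span_singleton]
  refine ⟨(‖w‖:ℂ), ?_⟩
  rw [smul_smul, mul_inv_cancel₀ (by exact_mod_cast norm_ne_zero_iff.2 hw), one_smul]

lemma build (y : ℤ) (a b : H) (ha : a ∈ Hx y) (hb : b ∈ Hx y) (hab : ⟪a, b⟫ = 0) :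
    ∃ u v, ONBx y u v ∧ b ∈ Submodule.span ℂ {u} ∧ a ∈ Submodule.span ℂ {v} := by
  by_cases hb0 : b = 0
  · by_cases ha0 : a = 0
    · refine ⟨e y 0, e y 1, ⟨e_mem y 0, e_mem y 1, ?_, ?_, ?_⟩, by simp [hb0], by simp [ha0]⟩
      · exact norm_eq_one_of_inner_self (by simp [inner_e, -inner_self_eq_norm_sq_to_K])
      · exact norm_eq_one_of_inner_self (by simp [inner_e, -inner_self_eq_norm_sq_to_K])
      · simp [inner_e]
    · -- b = 0, a ≠ 0 : v := a/‖a‖, u := perp v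
      set v := ((‖a‖:ℂ))⁻¹ • a with hv
      have hvH : v ∈ Hx y := Submodule.smul_mem _ _ ha
      have hvn : ‖v‖ = 1 := norm_smul_inv a ha0
      obtain ⟨u, huH, hun, huv⟩ := exists_perp hvH hvn
      refine ⟨u, v, ⟨huH, hvH, hun, hvn, ?_⟩, by simp [hb0], mem_span_norm_smul a ha0⟩
      rw [← inner_conj_symm, huv, map_zero]
  · by_cases ha0 : a = 0
    · set u := ((‖b‖:ℂ))⁻¹ • b with hu
      have huH : u ∈ Hx y := Submodule.smul_mem _ _ hb
      have hun : ‖u‖ = 1 := norm_smul_inv b hb0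
      obtain ⟨v, hvH, hvn, huv⟩ := exists_perp huH hun
      exact ⟨u, v, ⟨huH, hvH, hun, hvn, huv⟩, mem_span_norm_smul b hb0, by simp [ha0]⟩
    · refine ⟨((‖b‖:ℂ))⁻¹ • b, ((‖a‖:ℂ))⁻¹ • a,
        ⟨Submodule.smul_mem _ _ hb, Submodule.smul_mem _ _ ha,
          norm_smul_inv b hb0, norm_smul_inv a ha0, ?_⟩,
        mem_span_norm_smul b hb0, mem_span_norm_smul a ha0⟩
      rw [inner_smul_left, inner_smul_right]
      rw [← inner_conj_symm, hab]
      simp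



lemma clm_apply (U : H ≃ₗᵢ[ℂ] H) (w : H) : clm U w = U w := rfl

lemma decomp3 {a b c : ℤ} {w : H} (h : w ∈ Hx a ⊔ Hx b ⊔ Hx c) :
    ∃ u v t, u ∈ Hx a ∧ v ∈ Hx b ∧ t ∈ Hx c ∧ w = u + v + t := by
  rw [Submodule.mem_sup] at h
  obtain ⟨uv, huv, t, ht, hw⟩ := h
  rw [Submodule.mem_sup] at huv
  obtain ⟨u, hu, v, hv, huv'⟩ := huv
  exact ⟨u, v, t, hu, hv, ht, by rw [← hw, ← huv']⟩

lemma key (U : H ≃ₗᵢ[ℂ] H) (hU : SSQW U) (y : ℤ) (ψ φ : H)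
    (hψ : ψ ∈ Hx (y - 1)) (hφ : φ ∈ Hx (y + 1)) :
    ⟪P y (U ψ), P y (U φ)⟫ = 0 := by
  have h1 : ⟪P y (U ψ), P y (U φ)⟫ = ⟪U ψ, P y (U φ)⟫ := by
    rw [P_sa, P_idem]
  rw [h1]
  have hUψ := hU.1 (y - 1) ψ hψ
  have e1 : y - 1 - 1 = y - 2 := by ring
  have e2 : y - 1 + 1 = y := by ring
  rw [e1, e2] at hUψ
  have hUφ := hU.1 (y + 1) φ hφ
  have e3 : y + 1 - 1 = y := by ring
  rw [e3] at hUφ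
  obtain ⟨p, q, r, hp, hq, hr, hUψ'⟩ := decomp3 hUψ
  obtain ⟨u, v, t, hu, hv, ht, hUφ'⟩ := decomp3 hUφ
  have hPy : P y (U φ) = u := by
    rw [hUφ', map_add, map_add, P_of_mem hu,
      P_of_mem_ne (by omega) hv, P_of_mem_ne (by omega) ht, add_zero, add_zero]
  rw [hPy]
  have horth : ⟪U ψ, U φ⟫ = 0 := by
    rw [U.inner_map_map]
    exact inner_fiber_eq_zero (by omega) hψ hφ
  rw [hUφ', inner_add_right, inner_add_right] at horth
  have hv0 : ⟪U ψ, v⟫ = 0 := by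
    rw [hUψ', inner_add_left, inner_add_left,
      inner_fiber_eq_zero (by omega : y - 2 ≠ y + 1) hp hv,
      inner_fiber_eq_zero (by omega : y - 1 ≠ y + 1) hq hv,
      inner_fiber_eq_zero (by omega : y ≠ y + 1) hr hv]
    ring
  have ht0 : ⟪U ψ, t⟫ = 0 := by
    rw [hUψ', inner_add_left, inner_add_left,
      inner_fiber_eq_zero (by omega : y - 2 ≠ y + 1 + 1) hp ht,
      inner_fiber_eq_zero (by omega : y - 1 ≠ y + 1 + 1) hq ht,
      inner_fiber_eq_zero (by omega : y ≠ y + 1 + 1) hr ht]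
    ring
  rw [hv0, ht0] at horth
  linear_combination horth

set_option synthInstance.maxHeartbeats 1000000 in
/-- For a unitary `U` satisfying the SSQW conditions, there
exists for each `x` an orthonormal basis `{η₁ˣ, η₂ˣ}` of `H_x` such that
`U H_x ⊆ ℂη₁^{x−1} ⊕ H_x ⊕ ℂη₂^{x+1}` for every `x`. -/
theorem exists_eta_bases (U : H ≃ₗᵢ[ℂ] H) (hU : SSQW U) :
    ∃ η₁ η₂ : ℤ → H,
      (∀ x : ℤ, ONBx x (η₁ x) (η₂ x)) ∧
      (∀ x : ℤ, ∀ ψ ∈ Hx x,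
        U ψ ∈ Submodule.span ℂ {η₁ (x - 1)} ⊔ Hx x ⊔ Submodule.span ℂ {η₂ (x + 1)}) := by
  -- extract spanning vectors of the rank-≤1 ranges
  have hA := fun x => (rank_submodule_le_one_iff _).mp (hU.2.1 x)
  have hB := fun x => (rank_submodule_le_one_iff _).mp (hU.2.2 x)
  choose A hA1 hA2 using hA
  choose B hB1 hB2 using hB
  -- A x = P (x+1) (U (P x w)), lives in Hx (x+1); B x in Hx (x-1)
  have hAform : ∀ x, ∃ w, P (x + 1) (U (P x w)) = A x := by
    intro x
    obtain ⟨w, hw⟩ := hA1 x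
    exact ⟨w, hw⟩
  have hBform : ∀ x, ∃ w, P (x - 1) (U (P x w)) = B x := by
    intro x
    obtain ⟨w, hw⟩ := hB1 x
    exact ⟨w, hw⟩
  -- at each site y : a y := A (y-1) ∈ Hx y, b y := B (y+1) ∈ Hx y
  have haH : ∀ y : ℤ, A (y - 1) ∈ Hx y := by
    intro y
    obtain ⟨w, hw⟩ := hAform (y - 1)
    rw [← hw]
    have : y - 1 + 1 = y := by ring
    rw [this]
    exact P_mem y _
  have hbH : ∀ y : ℤ, B (y + 1) ∈ Hx y := by
    intro y
    obtain ⟨w, hw⟩ := hBform (y + 1)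
    rw [← hw]
    have : y + 1 - 1 = y := by ring
    rw [this]
    exact P_mem y _
  have hab : ∀ y : ℤ, ⟪A (y - 1), B (y + 1)⟫ = 0 := by
    intro y
    obtain ⟨w, hw⟩ := hAform (y - 1)
    obtain ⟨w', hw'⟩ := hBform (y + 1)
    have e1 : y - 1 + 1 = y := by ring
    have e2 : y + 1 - 1 = y := by ring
    rw [← hw, ← hw', e1, e2]
    exact key U hU y _ _ (P_mem (y - 1) w) (P_mem (y + 1) w')
  -- build the bases
  have hbuild := fun y => build y (A (y - 1)) (B (y + 1)) (haH y) (hbH y) (hab y)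
  choose η₁ η₂ honb hmemB hmemA using hbuild
  refine ⟨η₁, η₂, honb, ?_⟩
  intro x ψ hψ
  obtain ⟨u, v, t, hu, hv, ht, hdec⟩ := decomp3 (hU.1 x ψ hψ)
  have hPψ : P x ψ = ψ := P_of_mem hψ
  -- u is in span of η₁ (x-1)
  have hu' : u ∈ Submodule.span ℂ {η₁ (x - 1)} := by
    have hurange : u ∈ LinearMap.range (((P (x - 1)).comp ((clm U).comp (P x))).toLinearMap) := by
      refine ⟨ψ, ?_⟩
      simp only [ContinuousLinearMap.coe_comp, LinearMap.coe_comp, Function.comp_apply,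
        ContinuousLinearMap.coe_coe]
      rw [hPψ, clm_apply, hdec, map_add, map_add, P_of_mem hu,
        P_of_mem_ne (by omega) hv, P_of_mem_ne (by omega) ht, add_zero, add_zero]
    have h1 : u ∈ Submodule.span ℂ {B x} := hB2 x hurange
    have h2 : Submodule.span ℂ {B x} ≤ Submodule.span ℂ {η₁ (x - 1)} := by
      rw [Submodule.span_le, Set.singleton_subset_iff]
      have := hmemB (x - 1)
      have e1 : x - 1 + 1 = x := by ring
      rwa [e1] at this
    exact h2 h1
  have ht' : t ∈ Submodule.span ℂ {η₂ (x + 1)} := by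
    have htrange : t ∈ LinearMap.range (((P (x + 1)).comp ((clm U).comp (P x))).toLinearMap) := by
      refine ⟨ψ, ?_⟩
      simp only [ContinuousLinearMap.coe_comp, LinearMap.coe_comp, Function.comp_apply,
        ContinuousLinearMap.coe_coe]
      rw [hPψ, clm_apply, hdec, map_add, map_add, P_of_mem ht,
        P_of_mem_ne (by omega) hu, P_of_mem_ne (by omega) hv]
      abel
    have h1 : t ∈ Submodule.span ℂ {A x} := hA2 x htrange
    have h2 : Submodule.span ℂ {A x} ≤ Submodule.span ℂ {η₂ (x + 1)} := by
      rw [Submodule.span_le, Set.singleton_subset_iff]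
      have := hmemA (x + 1)
      have e1 : x + 1 - 1 = x := by ring
      rwa [e1] at this
    exact h2 h1
  rw [hdec]
  exact Submodule.add_mem _
    (Submodule.add_mem _ (Submodule.mem_sup_left (Submodule.mem_sup_left hu'))
      (Submodule.mem_sup_left (Submodule.mem_sup_right hv)))
    (Submodule.mem_sup_right ht')
end
end

section
/- Let U be a unitary on H satisfying the SSQW conditions, and let {η₁ˣ, η₂ˣ}_{x∈ℤ} be orthonormal bases of the H_x with U H_x ⊆ ℂη₁^{x−1} ⊕ H_x ⊕ ℂη₂^{x+1} for all x ∈ ℤ. If for some y ∈ ℤ there is an orthonormal basis {ζ₁ʸ, ζ₂ʸ} of H_y with U P_y = |η₁^{y−1}⟩⟨ζ₁ʸ| + |η₂ʸ⟩⟨ζ₂ʸ|, then there exist orthonormal bases {ζ₁ˣ, ζ₂ˣ} of H_x for every x ∈ ℤ such that U = Σ_{x∈ℤ} |η₁^{x−1}⟩⟨ζ₁ˣ| + |η₂ˣ⟩⟨ζ₂ˣ| (equivalently, U ζ₁ˣ = η₁^{x−1} and U ζ₂ˣ = η₂ˣ for all x ∈ ℤ). -/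
noncomputable section

local notation "⟪" x ", " y "⟫" => @inner ℂ H _ x y

lemma inner_e_apply (x : ℤ) (i : Fin 2) (f : H) : ⟪e x i, f⟫ = f (x, i) := by
  rw [e, lp.inner_single_left]
  simp [RCLike.inner_apply]

lemma inner_e_e (x z : ℤ) (i j : Fin 2) :
    ⟪e x i, e z j⟫ = if (z, j) = (x, i) then 1 else 0 := by
  rw [inner_e_apply, e, lp.single_apply]
  split_ifs with h1 h2 h2 <;> simp_all

lemma mem_Hx_iff {x : ℤ} {v : H} : v ∈ Hx x ↔ ∃ a b : ℂ, a • e x 0 + b • e x 1 = v :=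
  Submodule.mem_span_pair

lemma e_mem_Hx (x : ℤ) (i : Fin 2) : e x i ∈ Hx x := by
  fin_cases i
  · exact Submodule.subset_span (by simp)
  · exact Submodule.subset_span (by simp)

lemma norm_e (x : ℤ) (i : Fin 2) : ‖e x i‖ = 1 := by
  have := lp.norm_single (p := 2) (E := fun _ : ℤ × Fin 2 => ℂ)
    (by norm_num) (x, i) (1 : ℂ)
  simpa [e] using this

lemma Hx_ortho {x z : ℤ} (hxz : x ≠ z) {u v : H} (hu : u ∈ Hx x) (hv : v ∈ Hx z) :
    ⟪u, v⟫ = 0 := by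
  obtain ⟨a, b, rfl⟩ := mem_Hx_iff.mp hu
  obtain ⟨c, d, rfl⟩ := mem_Hx_iff.mp hv
  simp [inner_add_left, inner_add_right, inner_smul_left, inner_smul_right, inner_e_e,
    Prod.ext_iff, hxz, hxz.symm, Ne.symm hxz]

lemma inner_self_one {u : H} (hu : ‖u‖ = 1) : ⟪u, u⟫ = 1 := by
  rw [inner_self_eq_norm_sq_to_K, hu]
  norm_num

lemma finrank_span_pair {u v : H} (hu : ‖u‖ = 1) (hv : ‖v‖ = 1) (huv : ⟪u, v⟫ = 0) :
    Module.finrank ℂ (Submodule.span ℂ ({u, v} : Set H)) = 2 := by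
  have hvu : ⟪v, u⟫ = 0 := by
    rw [← inner_conj_symm, huv, map_zero]
  have ho : Orthonormal ℂ (![u, v]) := by
    rw [orthonormal_iff_ite]
    intro i j
    fin_cases i <;> fin_cases j <;>
      simp [inner_self_one hu, inner_self_one hv, huv, hvu, hu, hv]
  have hr : ({u, v} : Set H) = Set.range ![u, v] := by
    ext w
    simp [Fin.exists_fin_two, or_comm]
  rw [hr, finrank_span_eq_card ho.linearIndependent]
  simp

lemma finrank_Hx (x : ℤ) : Module.finrank ℂ (Hx x) = 2 := by
  rw [Hx]
  exact finrank_span_pair (norm_e x 0) (norm_e x 1) (by simp [inner_e_e])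

instance Hx_fd (x : ℤ) : FiniteDimensional ℂ (Hx x) :=
  FiniteDimensional.span_of_finite ℂ (Set.toFinite _)

lemma span_pair_eq_of_mem {u v : H} {W : Submodule ℂ H} [FiniteDimensional ℂ W]
    (hW : Module.finrank ℂ W = 2)
    (hu : u ∈ W) (hv : v ∈ W) (h1 : ‖u‖ = 1) (h2 : ‖v‖ = 1) (h3 : ⟪u, v⟫ = 0) :
    Submodule.span ℂ ({u, v} : Set H) = W := by
  apply Submodule.eq_of_le_of_finrank_le
  · rw [Submodule.span_le]
    intro w hw
    rcases hw with h | h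
    · subst h; exact hu
    · rw [Set.mem_singleton_iff] at h; subst h; exact hv
  · rw [hW, finrank_span_pair h1 h2 h3]

lemma mem_Hx_of_coords {x : ℤ} {f : H} (h : ∀ z : ℤ, ∀ i : Fin 2, z ≠ x → f (z, i) = 0) :
    f ∈ Hx x := by
  have hf : f (x, 0) • e x 0 + f (x, 1) • e x 1 = f := by
    apply lp.ext
    funext p
    obtain ⟨z, i⟩ := p
    have hco : (↑(f (x, 0) • e x 0 + f (x, 1) • e x 1) : ∀ p : ℤ × Fin 2, ℂ) (z, i)
        = f (x, 0) * (e x 0 : ∀ p : ℤ × Fin 2, ℂ) (z, i)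
          + f (x, 1) * (e x 1 : ∀ p : ℤ × Fin 2, ℂ) (z, i) := by
      simp [lp.coeFn_add, lp.coeFn_smul]
      rfl
    rw [hco]
    by_cases hz : z = x
    · subst hz
      fin_cases i <;> simp [e, lp.single_apply]
    · simp [h z i hz, e, lp.single_apply, hz]
  rw [← hf]
  exact Submodule.add_mem _ (Submodule.smul_mem _ _ (e_mem_Hx x 0))
    (Submodule.smul_mem _ _ (e_mem_Hx x 1))

section Main

variable (U : H ≃ₗᵢ[ℂ] H) (η₁ η₂ : ℤ → H)

lemma inner_η₁₂ (hη : ∀ x : ℤ, ONBx x (η₁ x) (η₂ x)) (x z : ℤ) : ⟪η₁ x, η₂ z⟫ = 0 := by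
  by_cases h : x = z
  · subst h; exact (hη x).2.2.2.2
  · exact Hx_ortho h (hη x).1 (hη z).2.1

lemma inner_η₂₁ (hη : ∀ x : ℤ, ONBx x (η₁ x) (η₂ x)) (x z : ℤ) : ⟪η₂ x, η₁ z⟫ = 0 := by
  rw [← inner_conj_symm, inner_η₁₂ η₁ η₂ hη, map_zero]

lemma inner_η₁₁ (hη : ∀ x : ℤ, ONBx x (η₁ x) (η₂ x)) {x z : ℤ} (h : x ≠ z) :
    ⟪η₁ x, η₁ z⟫ = 0 := Hx_ortho h (hη x).1 (hη z).1

lemma inner_η₂₂ (hη : ∀ x : ℤ, ONBx x (η₁ x) (η₂ x)) {x z : ℤ} (h : x ≠ z) :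
    ⟪η₂ x, η₂ z⟫ = 0 := Hx_ortho h (hη x).2.1 (hη z).2.1

lemma inner_U_e_eq_zero
    (hrange : ∀ x : ℤ, ∀ ψ ∈ Hx x,
      U ψ ∈ Submodule.span ℂ {η₁ (x - 1)} ⊔ Hx x ⊔ Submodule.span ℂ {η₂ (x + 1)})
    (x : ℤ) {z₁ z₂ : H} (hz : ONBx x z₁ z₂)
    (h1 : U z₁ = η₁ (x - 1)) (h2 : U z₂ = η₂ x)
    (w : H) (hwa : ⟪η₁ (x - 1), w⟫ = 0) (hwb : ⟪η₂ x, w⟫ = 0)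
    (hwc : ∀ z : ℤ, z ≠ x + 1 → z ≠ x → ⟪η₁ (z - 1), w⟫ = 0)
    (hwd : ∀ z : ℤ, z ≠ x + 1 → z ≠ x → ⟪η₂ (z + 1), w⟫ = 0)
    (hwe : ∀ z : ℤ, z ≠ x + 1 → z ≠ x → ∀ h ∈ Hx z, ⟪h, w⟫ = 0)
    {z : ℤ} (hzx : z ≠ x + 1) (i : Fin 2) : ⟪U (e z i), w⟫ = 0 := by
  by_cases hz' : z = x
  · subst hz'
    have hsp : Submodule.span ℂ ({z₁, z₂} : Set H) = Hx z :=
      span_pair_eq_of_mem (finrank_Hx z) hz.1 hz.2.1 hz.2.2.1 hz.2.2.2.1 hz.2.2.2.2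
    obtain ⟨a, b, hab⟩ := Submodule.mem_span_pair.mp (hsp ▸ e_mem_Hx z i)
    rw [← hab, map_add, map_smul, map_smul, h1, h2, inner_add_left, inner_smul_left,
      inner_smul_left, hwa, hwb]
    ring
  · have hm := hrange z (e z i) (e_mem_Hx z i)
    rw [Submodule.mem_sup] at hm
    obtain ⟨a, ha, b, hb, hab⟩ := hm
    rw [Submodule.mem_sup] at ha
    obtain ⟨c, hc, d, hd, hcd⟩ := ha
    obtain ⟨α, rfl⟩ := Submodule.mem_span_singleton.mp hc
    obtain ⟨β, rfl⟩ := Submodule.mem_span_singleton.mp hb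
    rw [← hab, ← hcd, inner_add_left, inner_add_left, inner_smul_left, inner_smul_left,
      hwc z hzx hz', hwd z hzx hz', hwe z hzx hz' d hd]
    ring

end Main

def Q (U : H ≃ₗᵢ[ℂ] H) (η₁ η₂ : ℤ → H) (x : ℤ) : Prop :=
  ∃ z₁ z₂ : H, ONBx x z₁ z₂ ∧ U z₁ = η₁ (x - 1) ∧ U z₂ = η₂ x

lemma step_fwd (U : H ≃ₗᵢ[ℂ] H) (η₁ η₂ : ℤ → H)
    (hη : ∀ x : ℤ, ONBx x (η₁ x) (η₂ x))
    (hrange : ∀ x : ℤ, ∀ ψ ∈ Hx x,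
      U ψ ∈ Submodule.span ℂ {η₁ (x - 1)} ⊔ Hx x ⊔ Submodule.span ℂ {η₂ (x + 1)})
    (x : ℤ) (hQ : Q U η₁ η₂ x) : Q U η₁ η₂ (x + 1) := by
  obtain ⟨z₁, z₂, hz, h1, h2⟩ := hQ
  set φ := U.symm (η₁ x) with hφ
  set ψ := U.symm (η₂ (x + 1)) with hψ
  have key : ∀ w : H, ∀ z : ℤ, z ≠ x + 1 → ∀ i : Fin 2, ⟪U (e z i), w⟫ = 0 →
      (U.symm w) (z, i) = 0 := by
    intro w z hzx i h0
    have h0' : ⟪e z i, U.symm w⟫ = 0 := by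
      rw [← U.inner_map_map (e z i) (U.symm w), U.apply_symm_apply]
      exact h0
    rwa [inner_e_apply] at h0'
  have hφmem : φ ∈ Hx (x + 1) := by
    apply mem_Hx_of_coords
    intro z i hzx
    apply key _ _ hzx
    apply inner_U_e_eq_zero U η₁ η₂ hrange x hz h1 h2
    · exact inner_η₁₁ η₁ η₂ hη (by omega)
    · exact inner_η₂₁ η₁ η₂ hη x x
    · intro z' _ _; exact inner_η₁₁ η₁ η₂ hη (by omega)
    · intro z' _ _; exact inner_η₂₁ η₁ η₂ hη _ _
    · intro z' _ hz'x h hh; exact Hx_ortho hz'x hh (hη x).1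
    · exact hzx
  have hψmem : ψ ∈ Hx (x + 1) := by
    apply mem_Hx_of_coords
    intro z i hzx
    apply key _ _ hzx
    apply inner_U_e_eq_zero U η₁ η₂ hrange x hz h1 h2
    · exact inner_η₁₂ η₁ η₂ hη _ _
    · exact inner_η₂₂ η₁ η₂ hη (by omega)
    · intro z' _ _; exact inner_η₁₂ η₁ η₂ hη _ _
    · intro z' hz' _; exact inner_η₂₂ η₁ η₂ hη (by omega)
    · intro z' hz' _ h hh; exact Hx_ortho hz' hh (hη (x + 1)).2.1
    · exact hzx
  refine ⟨φ, ψ, ⟨hφmem, hψmem, ?_, ?_, ?_⟩, ?_, ?_⟩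
  · rw [hφ, U.symm.norm_map, (hη x).2.2.1]
  · rw [hψ, U.symm.norm_map, (hη (x + 1)).2.2.2.1]
  · rw [hφ, hψ, U.symm.inner_map_map]
    exact inner_η₁₂ η₁ η₂ hη _ _
  · rw [hφ, U.apply_symm_apply]
    congr 1
    omega
  · rw [hψ, U.apply_symm_apply]

lemma step_bwd (U : H ≃ₗᵢ[ℂ] H) (η₁ η₂ : ℤ → H)
    (hη : ∀ x : ℤ, ONBx x (η₁ x) (η₂ x))
    (hrange : ∀ x : ℤ, ∀ ψ ∈ Hx x,
      U ψ ∈ Submodule.span ℂ {η₁ (x - 1)} ⊔ Hx x ⊔ Submodule.span ℂ {η₂ (x + 1)})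
    (x : ℤ) (hQ : Q U η₁ η₂ x) : Q U η₁ η₂ (x - 1) := by
  obtain ⟨z₁, z₂, hz, h1, h2⟩ := hQ
  set S := Submodule.span ℂ ({η₁ (x - 2), η₂ (x - 1)} : Set H) with hS
  set M := Submodule.map (U.toLinearEquiv : H →ₗ[ℂ] H) (Hx (x - 1)) with hM
  have hHsp : Submodule.span ℂ ({η₁ (x - 1), η₂ (x - 1)} : Set H) = Hx (x - 1) :=
    span_pair_eq_of_mem (finrank_Hx (x - 1)) (hη (x - 1)).1 (hη (x - 1)).2.1
      (hη (x - 1)).2.2.1 (hη (x - 1)).2.2.2.1 (hη (x - 1)).2.2.2.2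
  have hMS : M ≤ S := by
    rintro w ⟨v, hv, rfl⟩
    have hm := hrange (x - 1) v hv
    have e1 : x - 1 - 1 = x - 2 := by ring
    have e2 : x - 1 + 1 = x := by ring
    rw [e1, e2, Submodule.mem_sup] at hm
    obtain ⟨a, ha, b, hb, hab⟩ := hm
    rw [Submodule.mem_sup] at ha
    obtain ⟨c, hc, d, hd, hcd⟩ := ha
    obtain ⟨α, rfl⟩ := Submodule.mem_span_singleton.mp hc
    obtain ⟨β, rfl⟩ := Submodule.mem_span_singleton.mp hb
    obtain ⟨γ, δ, hγδ⟩ := Submodule.mem_span_pair.mp (hHsp ▸ hd)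
    have hUv : (U.toLinearEquiv : H →ₗ[ℂ] H) v
        = α • η₁ (x - 2) + (γ • η₁ (x - 1) + δ • η₂ (x - 1)) + β • η₂ x := by
      show U v = _
      rw [hγδ, hcd, hab]
    have hortho2 : ⟪η₂ x, U v⟫ = 0 := by
      rw [← h2, U.inner_map_map]
      exact Hx_ortho (by omega) hz.2.1 hv
    have hortho1 : ⟪η₁ (x - 1), U v⟫ = 0 := by
      rw [← h1, U.inner_map_map]
      exact Hx_ortho (by omega) hz.1 hv
    have hβ : β = 0 := by
      have hexp : ⟪η₂ x, U v⟫ = β := by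
        show ⟪η₂ x, (U.toLinearEquiv : H →ₗ[ℂ] H) v⟫ = β
        rw [hUv]
        simp only [inner_add_right, inner_smul_right]
        rw [inner_η₂₁ η₁ η₂ hη, inner_η₂₁ η₁ η₂ hη, inner_η₂₂ η₁ η₂ hη (by omega : x ≠ x - 1),
          inner_self_one (hη x).2.2.2.1]
        ring
      rw [hortho2] at hexp
      exact hexp.symm
    have hγ : γ = 0 := by
      have hexp : ⟪η₁ (x - 1), U v⟫ = γ := by
        show ⟪η₁ (x - 1), (U.toLinearEquiv : H →ₗ[ℂ] H) v⟫ = γ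
        rw [hUv]
        simp only [inner_add_right, inner_smul_right]
        rw [inner_η₁₁ η₁ η₂ hη (by omega : x - 1 ≠ x - 2),
          inner_self_one (hη (x - 1)).2.2.1, inner_η₁₂ η₁ η₂ hη, inner_η₁₂ η₁ η₂ hη]
        ring
      rw [hortho1] at hexp
      exact hexp.symm
    rw [hUv, hβ, hγ]
    apply Submodule.mem_span_pair.mpr
    exact ⟨α, δ, by module⟩
  haveI : FiniteDimensional ℂ S := FiniteDimensional.span_of_finite ℂ (Set.toFinite _)
  have hMeq : M = S := by
    apply Submodule.eq_of_le_of_finrank_le hMS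
    have hfS : Module.finrank ℂ S = 2 :=
      finrank_span_pair (hη (x - 2)).2.2.1 (hη (x - 1)).2.2.2.1 (inner_η₁₂ η₁ η₂ hη _ _)
    have hfM : Module.finrank ℂ M = 2 := by
      rw [hM, LinearEquiv.finrank_map_eq, finrank_Hx]
    rw [hfS, hfM]
  have hη1 : η₁ (x - 2) ∈ M := hMeq ▸ Submodule.subset_span (by simp)
  have hη2 : η₂ (x - 1) ∈ M := hMeq ▸ Submodule.subset_span (by simp)
  obtain ⟨w₁, hw₁, hw₁'⟩ := hη1
  obtain ⟨w₂, hw₂, hw₂'⟩ := hη2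
  have hw₁' : U w₁ = η₁ (x - 2) := hw₁'
  have hw₂' : U w₂ = η₂ (x - 1) := hw₂'
  refine ⟨w₁, w₂, ⟨hw₁, hw₂, ?_, ?_, ?_⟩, ?_, ?_⟩
  · rw [← U.norm_map w₁, hw₁', (hη (x - 2)).2.2.1]
  · rw [← U.norm_map w₂, hw₂', (hη (x - 1)).2.2.2.1]
  · rw [← U.inner_map_map w₁ w₂, hw₁', hw₂']
    exact inner_η₁₂ η₁ η₂ hη _ _
  · rw [hw₁']
    congr 1
    omega
  · exact hw₂'

lemma P_apply_mem {x : ℤ} {v : H} (hv : v ∈ Hx x) : (P x) v = v := by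
  obtain ⟨a, b, rfl⟩ := mem_Hx_iff.mp hv
  simp only [P, ketbra, ContinuousLinearMap.add_apply, ContinuousLinearMap.smulRight_apply,
    innerSL_apply_apply, inner_add_right, inner_smul_right, inner_e_e]
  norm_num [smul_smul]

/-- If for some `y` we have
`U P_y = |η₁^{y−1}⟩⟨ζ₁ʸ| + |η₂ʸ⟩⟨ζ₂ʸ|`, then there are orthonormal bases
`{ζ₁ˣ, ζ₂ˣ}` of every `H_x` with `U ζ₁ˣ = η₁^{x−1}` and `U ζ₂ˣ = η₂ˣ`,
i.e. `U = Σ_x |η₁^{x−1}⟩⟨ζ₁ˣ| + |η₂ˣ⟩⟨ζ₂ˣ|`. -/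
theorem exclude_case_one (U : H ≃ₗᵢ[ℂ] H) (hU : SSQW U) (η₁ η₂ : ℤ → H)
    (hη : ∀ x : ℤ, ONBx x (η₁ x) (η₂ x))
    (hrange : ∀ x : ℤ, ∀ ψ ∈ Hx x,
      U ψ ∈ Submodule.span ℂ {η₁ (x - 1)} ⊔ Hx x ⊔ Submodule.span ℂ {η₂ (x + 1)})
    (y : ℤ) (ζ₁ ζ₂ : H) (hζ : ONBx y ζ₁ ζ₂)
    (hUPy : (clm U).comp (P y) = ketbra (η₁ (y - 1)) ζ₁ + ketbra (η₂ y) ζ₂) :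
    ∃ ζ₁' ζ₂' : ℤ → H, (∀ x : ℤ, ONBx x (ζ₁' x) (ζ₂' x)) ∧
      ∀ x : ℤ, U (ζ₁' x) = η₁ (x - 1) ∧ U (ζ₂' x) = η₂ x := by
  obtain ⟨hζ1m, hζ2m, hζ1n, hζ2n, hζi⟩ := hζ
  have hζi' : ⟪ζ₂, ζ₁⟫ = 0 := by rw [← inner_conj_symm, hζi, map_zero]
  have happ : ∀ v : H, v ∈ Hx y → U v = ⟪ζ₁, v⟫ • η₁ (y - 1) + ⟪ζ₂, v⟫ • η₂ y := by
    intro v hv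
    have := congrArg (fun T : H →L[ℂ] H => T v) hUPy
    simp only [ContinuousLinearMap.comp_apply, ContinuousLinearMap.add_apply, ketbra,
      ContinuousLinearMap.smulRight_apply, innerSL_apply_apply] at this
    rw [P_apply_mem hv] at this
    exact this
  have hbase : Q U η₁ η₂ y := by
    refine ⟨ζ₁, ζ₂, ⟨hζ1m, hζ2m, hζ1n, hζ2n, hζi⟩, ?_, ?_⟩
    · rw [happ ζ₁ hζ1m, inner_self_one hζ1n, hζi']
      simp
    · rw [happ ζ₂ hζ2m, inner_self_one hζ2n, hζi]
      simp
  have key : ∀ x : ℤ, Q U η₁ η₂ x := by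
    intro x
    rcases le_or_gt y x with h | h
    · exact Int.le_induction hbase
        (fun n _ hn => step_fwd U η₁ η₂ hη hrange n hn) x h
    · exact Int.le_induction_down hbase
        (fun n _ hn => step_bwd U η₁ η₂ hη hrange n hn) x h.le
  choose f g hONB hf hg using key
  exact ⟨f, g, hONB, fun x => ⟨hf x, hg x⟩⟩
end
end
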